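/- Let G be a finitely generated group with word metric, X̄ a compact space with a G-action, and F a family of subgroups of G. If there exists, for a given d < ∞, an open F-cover U of G × X̄ (action g(h,x)=(gh,x)) with G-Lebesgue number d (every B(g,d) × {x} is contained in some member), then the family I = { B(U,−d) | U ∈ U } is an open F-cover of G × X̄ whose (G,d)-multiplicity is at most dim U + 1; i.e., each set B(g,d) × {x} intersects at most dim U + 1 members of I. -/
import Mathlib

open Pointwise

/-- `B(U, -d) = {(h,x) | B(h,d) × {x} ⊆ U}`. -/
def Bneg {G X : Type*} [MetricSpace G] (U : Set (G × X)) (d : ℝ) : Set (G × X) :=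
  {p : G × X | (Metric.closedBall p.1 d) ×ˢ ({p.2} : Set X) ⊆ U}

section Aux

variable {G X : Type*} [Group G] [MetricSpace G] [MulAction G X] {d : ℝ}

omit [Group G] [MulAction G X] in
lemma Bneg_subset (hd : 0 ≤ d) (U : Set (G × X)) : Bneg U d ⊆ U := by
  intro p hp
  have := hp (Set.mk_mem_prod (Metric.mem_closedBall_self hd) rfl)
  simpa using this

lemma Bneg_smul (hinv : ∀ g h k : G, dist (g * h) (g * k) = dist h k)
    (g : G) (U : Set (G × X)) : g • Bneg U d = Bneg (g • U) d := by
  ext ⟨h, x⟩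
  simp only [Set.mem_smul_set_iff_inv_smul_mem, Bneg, Set.mem_setOf_eq, Prod.smul_mk,
    smul_eq_mul]
  constructor
  · rintro H ⟨k, y⟩ ⟨hk, hy⟩
    simp only [Set.mem_singleton_iff] at hy
    subst hy
    rw [Set.mem_smul_set_iff_inv_smul_mem]
    have hk' : g⁻¹ * k ∈ Metric.closedBall (g⁻¹ * h) d := by
      simp only [Metric.mem_closedBall] at hk ⊢
      rw [hinv g⁻¹ k h]; exact hk
    exact H (Set.mk_mem_prod hk' rfl)
  · rintro H ⟨k, y⟩ ⟨hk, hy⟩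
    simp only [Set.mem_singleton_iff] at hy
    subst hy
    have hk' : g * k ∈ Metric.closedBall h d := by
      simp only [Metric.mem_closedBall] at hk ⊢
      have := hinv g⁻¹ (g * k) h
      simp only [inv_mul_cancel_left] at this
      rw [← this]; exact hk
    have := H (Set.mk_mem_prod hk' rfl)
    rw [Set.mem_smul_set_iff_inv_smul_mem] at this
    simpa using this

end Aux

theorem stmt18 {G X : Type*} [Group G] [MetricSpace G] [DiscreteTopology G]
    [TopologicalSpace X] [CompactSpace X] [MulAction G X]
    (hinv : ∀ g h k : G, dist (g * h) (g * k) = dist h k)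
    (hball : ∀ (g : G) (r : ℝ), (Metric.closedBall g r).Finite)
    (F : Set (Subgroup G))
    (d : ℝ) (hd : 0 < d) (n : ℕ)
    (𝒰 : Set (Set (G × X)))
    (hopen : ∀ U ∈ 𝒰, IsOpen U)
    (hequiv : ∀ (g : G), ∀ U ∈ 𝒰, g • U ∈ 𝒰)
    (hFsubset : ∀ U ∈ 𝒰, ∀ g : G, g • U = U ∨ Disjoint (g • U) U)
    (hstab : ∀ U ∈ 𝒰, MulAction.stabilizer G U ∈ F)
    (hLeb : ∀ (g : G) (x : X), ∃ U ∈ 𝒰,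
      (Metric.closedBall g d) ×ˢ ({x} : Set X) ⊆ U)
    (hdim : ∀ p : G × X, {U ∈ 𝒰 | p ∈ U}.encard ≤ (n + 1 : ℕ)) :
    ∀ ℐ : Set (Set (G × X)), ℐ = (fun U => Bneg U d) '' 𝒰 →
      (∀ W ∈ ℐ, IsOpen W) ∧
      (⋃₀ ℐ = Set.univ) ∧
      (∀ (g : G), ∀ W ∈ ℐ, g • W ∈ ℐ) ∧
      (∀ W ∈ ℐ, ∀ g : G, g • W = W ∨ Disjoint (g • W) W) ∧
      (∀ U ∈ 𝒰, (Bneg U d).Nonempty →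
        MulAction.stabilizer G (Bneg U d) = MulAction.stabilizer G U ∧
        MulAction.stabilizer G (Bneg U d) ∈ F) ∧
      (∀ (g : G) (x : X),
        {W ∈ ℐ | (((Metric.closedBall g d) ×ˢ ({x} : Set X)) ∩ W).Nonempty}.encard
          ≤ (n + 1 : ℕ)) := by
  intro ℐ hℐ
  subst hℐ
  refine ⟨?_, ?_, ?_, ?_, ?_, ?_⟩
  · -- openness
    rintro W ⟨U, hU, rfl⟩
    rw [isOpen_iff_mem_nhds]
    rintro ⟨h, x⟩ hp
    -- for each k in closedBall h d, pick open V_k ∋ x with {k} × V_k ⊆ U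
    have key : ∀ k : G, ∃ V : Set X, IsOpen V ∧ x ∈ V ∧
        (k ∈ Metric.closedBall h d → ∀ y ∈ V, (k, y) ∈ U) := by
      intro k
      by_cases hk : k ∈ Metric.closedBall h d
      · have hkx : (k, x) ∈ U := hp ⟨hk, rfl⟩
        obtain ⟨A, B, hA, hB, hkA, hxB, hAB⟩ := isOpen_prod_iff.mp (hopen U hU) k x hkx
        exact ⟨B, hB, hxB, fun _ y hy => hAB ⟨hkA, hy⟩⟩
      · exact ⟨Set.univ, isOpen_univ, trivial, fun hk' => absurd hk' hk⟩
    choose V hVopen hVx hVU using key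
    have hSfin : (Metric.closedBall h d).Finite := hball h d
    have hVinter : IsOpen (⋂ k ∈ Metric.closedBall h d, V k) :=
      hSfin.isOpen_biInter (fun k _ => hVopen k)
    rw [mem_nhds_iff]
    refine ⟨({h} : Set G) ×ˢ (⋂ k ∈ Metric.closedBall h d, V k), ?_, ?_, ?_⟩
    · rintro ⟨h', y⟩ ⟨hh', hy⟩
      simp only [Set.mem_singleton_iff] at hh'
      subst hh'
      rintro ⟨k, z⟩ ⟨hk, hz⟩
      simp only [Set.mem_singleton_iff] at hz
      subst hz
      exact hVU k hk z (Set.mem_iInter₂.mp hy k hk)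
    · exact (isOpen_discrete _).prod hVinter
    · exact ⟨rfl, Set.mem_iInter₂.mpr fun k _ => hVx k⟩
  · -- cover
    apply Set.eq_univ_of_forall
    rintro ⟨g, x⟩
    obtain ⟨U, hU, hUsub⟩ := hLeb g x
    exact ⟨Bneg U d, ⟨U, hU, rfl⟩, hUsub⟩
  · rintro g W ⟨U, hU, rfl⟩
    exact ⟨g • U, hequiv g U hU, (Bneg_smul hinv g U).symm⟩
  · rintro W ⟨U, hU, rfl⟩ g
    rcases hFsubset U hU g with h | h
    · left; rw [Bneg_smul hinv, h]
    · right
      rw [Bneg_smul hinv]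
      exact h.mono (Bneg_subset hd.le _) (Bneg_subset hd.le _)
  · intro U hU hne
    have hstabeq : MulAction.stabilizer G (Bneg U d) = MulAction.stabilizer G U := by
      ext g
      simp only [MulAction.mem_stabilizer_iff]
      constructor
      · intro hg
        rcases hFsubset U hU g with h | h
        · exact h
        · exfalso
          obtain ⟨p, hp⟩ := hne
          have hp1 : p ∈ g • U := by
            rw [← hg] at hp
            rw [Bneg_smul hinv] at hp
            exact Bneg_subset hd.le _ hp
          exact h.le_bot ⟨hp1, Bneg_subset hd.le _ hp⟩
      · intro hg
        rw [Bneg_smul hinv, hg]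
    exact ⟨hstabeq, hstabeq ▸ hstab U hU⟩
  · intro g x
    have hsub : {W ∈ (fun U => Bneg U d) '' 𝒰 |
        (((Metric.closedBall g d) ×ˢ ({x} : Set X)) ∩ W).Nonempty} ⊆
        (fun U => Bneg U d) '' {U ∈ 𝒰 | (g, x) ∈ U} := by
      rintro W ⟨⟨U, hU, rfl⟩, ⟨h, y⟩, ⟨⟨hh, hy⟩, hW⟩⟩
      simp only [Set.mem_singleton_iff] at hy
      subst hy
      refine ⟨U, ⟨hU, ?_⟩, rfl⟩
      apply hW
      refine ⟨?_, rfl⟩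
      simp only [Metric.mem_closedBall] at hh ⊢
      rw [dist_comm]; exact hh
    calc _ ≤ ((fun U => Bneg U d) '' {U ∈ 𝒰 | (g, x) ∈ U}).encard :=
            Set.encard_le_encard hsub
      _ ≤ {U ∈ 𝒰 | (g, x) ∈ U}.encard := Set.encard_image_le _ _
      _ ≤ (n + 1 : ℕ) := hdim (g, x)
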